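/- For every k ≥ 2, the Lyndon factorization of F_{2k} (with a < b) is ℓ_1, ℓ_2, …, ℓ_{k-1}, a, where ℓ_1 = ab and ℓ_{i+1} = φ(ℓ_i) with φ(a) = aab, φ(b) = ab. -/

import Mathlib

/-- Strings over the binary alphabet `{a, b}`: `false` is `a`, `true` is `b`. -/
abbrev Word := List Bool

/-- `w` is primitive if it is not of the form `x^j` for any `j ≥ 2`. -/
def Primitive (w : Word) : Prop := ¬ ∃ (x : Word) (j : ℕ), 2 ≤ j ∧ w = (List.replicate j x).flatten

/-- `u` occurs in `w` at (0-indexed) position `i`. -/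
def occursAt (u w : Word) (i : ℕ) : Prop :=
  i + u.length ≤ w.length ∧ (w.drop i).take u.length = u

instance (u w : Word) (i : ℕ) : Decidable (occursAt u w i) := by
  unfold occursAt; infer_instance

/-- Fibonacci words: `F 1 = b`, `F 2 = a`, `F (k+1) = F k ++ F (k-1)`. -/
def F : ℕ → Word
  | 0 => []
  | 1 => [true]
  | 2 => [false]
  | (n+3) => F (n+2) ++ F (n+1)

/-- Fibonacci numbers with `f 1 = f 2 = 1`. -/
def f : ℕ → ℕ
  | 0 => 0
  | 1 => 1
  | (n+2) => f (n+1) + f n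

/-- The morphism `φ(a) = aab`, `φ(b) = ab`. -/
def phi (w : Word) : Word := w.flatMap fun c => if c then [false, true] else [false, false, true]

/-- Lexicographic order on words induced by `a < b` (a proper prefix is smaller). -/
def wlt (x y : Word) : Prop := List.Lex (· < ·) x y

/-- `u` is a border of `w`: a proper substring that is both a prefix and a suffix. -/
def IsBorder (u w : Word) : Prop := u ≠ w ∧ u <+: w ∧ u <:+ w

/-- `w` is a Lyndon word: it is smaller than all of its proper nonempty suffixes. -/
def IsLyndon (w : Word) : Prop := ∀ s : Word, s <:+ w → s ≠ [] → s ≠ w → wlt w s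

/-- `fs` is the Lyndon factorization of `w`: a factorization into nonempty Lyndon
words that is lexicographically non-increasing (powers written as repetitions). -/
def IsLyndonFactorization (w : Word) (fs : List Word) : Prop :=
  fs.flatten = w ∧ (∀ x ∈ fs, IsLyndon x ∧ x ≠ []) ∧ List.Chain' (fun x y => ¬ wlt x y) fs

/-- `ℓ 1 = ab`, `ℓ (k+1) = φ (ℓ k)`. -/
def ell : ℕ → Word
  | 0 => []
  | 1 => [false, true]
  | (n+2) => phi (ell (n+1))

/-! ### Auxiliary morphisms -/

/-- `ν(a) = aba`, `ν(b) = ba`; satisfies `φ(w)·a = a·ν(w)`. -/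
def nu (w : Word) : Word := w.flatMap fun c => if c then [true, false] else [false, true, false]

/-- `θ(a) = aba`, `θ(b) = ab`; the even Fibonacci morphism, with `ν∘φ = θ∘ν`. -/
def theta (w : Word) : Word := w.flatMap fun c => if c then [false, true] else [false, true, false]

lemma phi_cons (c : Bool) (w : Word) :
    phi (c :: w) = (if c then [false, true] else [false, false, true]) ++ phi w := rfl

lemma phi_append (x y : Word) : phi (x ++ y) = phi x ++ phi y := by
  simp [phi]

lemma nu_append (x y : Word) : nu (x ++ y) = nu x ++ nu y := by
  simp [nu]

lemma theta_append (x y : Word) : theta (x ++ y) = theta x ++ theta y := by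
  simp [theta]

lemma conj (w : Word) : phi w ++ [false] = false :: nu w := by
  induction w with
  | nil => rfl
  | cons c w ih =>
    cases c <;> simp [phi_cons, nu, List.append_assoc] <;>
      simpa [phi, nu] using ih

lemma nu_phi (w : Word) : nu (phi w) = theta (nu w) := by
  induction w with
  | nil => rfl
  | cons c w ih =>
    cases c <;> simp [phi_cons, nu, theta, List.flatMap_append] at * <;> simp [ih]

lemma F_add3 (n : ℕ) : F (n + 3) = F (n + 2) ++ F (n + 1) := rfl

lemma theta_F : ∀ n, theta (F (n + 1)) = F (n + 3)
  | 0 => rfl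
  | 1 => rfl
  | (n+2) => by
    rw [F_add3 n, theta_append, theta_F (n+1), theta_F n]
    rfl

lemma nu_ell : ∀ n, nu (ell (n + 1)) = F (2 * n + 3) ++ F (2 * n + 4)
  | 0 => rfl
  | (n+1) => by
    have h1 : (2 : ℕ) * (n + 1) + 3 = (2 * n + 2) + 3 := by ring
    have h2 : (2 : ℕ) * (n + 1) + 4 = (2 * n + 3) + 3 := by ring
    show nu (phi (ell (n + 1))) = _
    rw [nu_phi, nu_ell n, theta_append, h1, h2,
      show (2:ℕ) * n + 3 = (2 * n + 2) + 1 from rfl,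
      show (2:ℕ) * n + 4 = (2 * n + 3) + 1 from by ring, theta_F, theta_F]

lemma ell_a : ∀ n, ell (n + 1) ++ [false] = false :: (F (2 * n + 1) ++ F (2 * n + 2))
  | 0 => rfl
  | (n+1) => by
    show phi (ell (n + 1)) ++ [false] = _
    rw [conj, nu_ell n]
    congr 2

lemma flattenQ : ∀ n, ((List.range n).map (fun j => ell (j + 1))).flatten ++ [false]
    = F (2 * n + 2)
  | 0 => rfl
  | (n+1) => by
    rw [List.range_succ, List.map_append, List.flatten_append]
    have : (2 : ℕ) * (n + 1) + 2 = (2 * n + 1) + 3 := by ring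
    rw [this, F_add3, show (2:ℕ)*n + 1 + 2 = (2*n) + 3 from by ring, F_add3]
    simp only [List.map_cons, List.map_nil, List.flatten_cons, List.flatten_nil,
      List.append_nil, List.append_assoc]
    rw [ell_a n, ← flattenQ n]
    simp [List.append_assoc]

/-! ### Order lemmas -/

lemma lex_append {t u : Word} (s : Word) (h : wlt t u) : wlt (s ++ t) (s ++ u) := by
  induction s with
  | nil => exact h
  | cons c s ih => exact List.Lex.cons ih

lemma phi_lt : ∀ {x y : Word}, wlt x y → wlt (phi x) (phi y) := by
  intro x y h
  induction h with
  | nil =>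
    rename_i b l
    cases b <;> exact List.Lex.nil
  | @cons a l₁ l₂ h ih =>
    rw [phi_cons, phi_cons]
    exact lex_append _ ih
  | @rel a l₁ b l₂ h =>
    cases a <;> cases b
    · exact absurd h (by decide)
    · exact List.Lex.cons (List.Lex.rel (by decide))
    · exact absurd h (by decide)
    · exact absurd h (by decide)

lemma wlt_asymm : ∀ {x y : Word}, wlt x y → ¬ wlt y x := by
  intro x y h
  induction h with
  | nil => intro h2; cases h2
  | @cons a l₁ l₂ h ih =>
    intro h2
    cases h2 with
    | cons h3 => exact ih h3
    | rel h3 => exact (lt_irrefl _ h3)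
  | @rel a l₁ b l₂ h =>
    intro h2
    cases h2 with
    | cons h3 => exact lt_irrefl _ h
    | rel h3 => exact absurd h (lt_asymm h3)

/-! ### Structure of `ell` -/

lemma ell_ne : ∀ n, ell (n + 1) ≠ [] := by
  intro n
  cases n with
  | zero => simp [ell]
  | succ n =>
    show phi (ell (n + 1)) ≠ []
    obtain ⟨c, t, h⟩ : ∃ c t, ell (n + 1) = c :: t := by
      cases h : ell (n + 1) with
      | nil => exact absurd h (ell_ne n)
      | cons c t => exact ⟨c, t, rfl⟩
    rw [h, phi_cons]
    cases c <;> simp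
termination_by n => n

lemma ell_head : ∀ n, ∃ t, ell (n + 1) = false :: t := by
  intro n
  cases n with
  | zero => exact ⟨[true], rfl⟩
  | succ n =>
    obtain ⟨t, ht⟩ := ell_head n
    exact ⟨_, by show phi (ell (n+1)) = _; rw [ht, phi_cons]; rfl⟩
termination_by n => n

lemma suffix_phi : ∀ (w s : Word), s <:+ phi w →
    ∃ v, v <:+ w ∧ (s = phi v ∨ s = true :: phi v ∨ s = false :: true :: phi v) := by
  intro w
  induction w with
  | nil =>
    intro s hs
    simp [phi] at hs
    exact ⟨[], by simp, Or.inl (by simp [phi, hs])⟩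
  | cons c w ih =>
    intro s hs
    have hext : ∀ v : Word, v <:+ w → v <:+ c :: w :=
      fun v hv => hv.trans (List.suffix_cons c w)
    cases c with
    | false =>
      rw [show phi (false :: w) = false :: false :: true :: phi w from rfl] at hs
      rcases List.suffix_cons_iff.mp hs with h | hs
      · exact ⟨false :: w, List.suffix_refl _, Or.inl (by rw [h]; rfl)⟩
      rcases List.suffix_cons_iff.mp hs with h | hs
      · exact ⟨w, List.suffix_cons _ _, Or.inr (Or.inr h)⟩
      rcases List.suffix_cons_iff.mp hs with h | hs
      · exact ⟨w, List.suffix_cons _ _, Or.inr (Or.inl h)⟩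
      · obtain ⟨v, hv, hc⟩ := ih s hs
        exact ⟨v, hext v hv, hc⟩
    | true =>
      rw [show phi (true :: w) = false :: true :: phi w from rfl] at hs
      rcases List.suffix_cons_iff.mp hs with h | hs
      · exact ⟨true :: w, List.suffix_refl _, Or.inl (by rw [h]; rfl)⟩
      rcases List.suffix_cons_iff.mp hs with h | hs
      · exact ⟨w, List.suffix_cons _ _, Or.inr (Or.inl h)⟩
      · obtain ⟨v, hv, hc⟩ := ih s hs
        exact ⟨v, hext v hv, hc⟩

lemma lyndon_phi {w : Word} (hL : IsLyndon w) (hw : ∃ t, w = false :: t) :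
    IsLyndon (phi w) := by
  obtain ⟨t0, rfl⟩ := hw
  intro s hs hne hneq
  obtain ⟨v, hv, hc⟩ := suffix_phi _ _ hs
  have hphiw : phi (false :: t0) = false :: false :: true :: phi t0 := rfl
  rcases hc with h | h | h
  · subst h
    have hvne : v ≠ [] := by rintro rfl; exact hne rfl
    have hvw : v ≠ false :: t0 := by rintro rfl; exact hneq rfl
    exact phi_lt (hL v hv hvne hvw)
  · subst h; rw [hphiw]; exact List.Lex.rel (by decide)
  · subst h; rw [hphiw]; exact List.Lex.cons (List.Lex.rel (by decide))

lemma ell_lyndon : ∀ n, IsLyndon (ell (n + 1)) := by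
  intro n
  induction n with
  | zero =>
    intro s hs hne hneq
    have hs' : s <:+ [false, true] := hs
    rcases List.suffix_cons_iff.mp hs' with h | hs2
    · exact absurd h hneq
    rcases List.suffix_cons_iff.mp hs2 with h | hs3
    · rw [h]; exact List.Lex.rel (by decide)
    · exact absurd (List.suffix_nil.mp hs3) hne
  | succ n ih =>
    show IsLyndon (phi (ell (n + 1)))
    exact lyndon_phi ih (ell_head n)

lemma ell_dec : ∀ n, wlt (ell (n + 2)) (ell (n + 1)) := by
  intro n
  induction n with
  | zero =>
    show wlt (phi (ell 1)) (ell 1)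
    exact List.Lex.cons (List.Lex.rel (by decide))
  | succ n ih =>
    show wlt (phi (ell (n + 2))) (phi (ell (n + 1)))
    exact phi_lt ih

lemma lyndon_a : IsLyndon [false] := by
  intro s hs hne hneq
  rcases List.suffix_cons_iff.mp hs with h | hs2
  · exact absurd h hneq
  · exact absurd (List.suffix_nil.mp hs2) hne

lemma not_wlt_ell_a (n : ℕ) : ¬ wlt (ell (n + 1)) [false] := by
  obtain ⟨t, ht⟩ := ell_head n
  rw [ht]
  intro h
  cases h with
  | cons h2 => cases h2
  | rel h2 => exact lt_irrefl _ h2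

/-- For `k ≥ 2`, the Lyndon factorization of `F (2k)` is `ℓ 1, …, ℓ (k-1), a`. -/
theorem stmt12 (k : ℕ) (hk : 2 ≤ k) :
    IsLyndonFactorization (F (2 * k))
      ((List.range (k - 1)).map (fun j => ell (j + 1)) ++ [[false]]) := by
  obtain ⟨m, rfl⟩ : ∃ m, k = m + 2 := ⟨k - 2, by omega⟩
  have hk1 : m + 2 - 1 = m + 1 := rfl
  rw [hk1]
  refine ⟨?_, ?_, ?_⟩
  · have h := flattenQ (m + 1)
    rw [List.flatten_append]
    simpa [show (2:ℕ) * (m + 2) = 2 * (m + 1) + 2 from by ring] using h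
  · intro x hx
    simp only [List.mem_append, List.mem_map, List.mem_range, List.mem_singleton] at hx
    rcases hx with ⟨j, _, rfl⟩ | rfl
    · exact ⟨ell_lyndon j, ell_ne j⟩
    · exact ⟨lyndon_a, by simp⟩
  · unfold List.Chain'
    rw [List.isChain_append]
    refine ⟨?_, List.isChain_singleton _, ?_⟩
    · rw [List.isChain_map]
      rw [List.isChain_range_succ]
      intro i _
      exact wlt_asymm (ell_dec i)
    · intro x hx y hy
      rw [List.range_succ, List.map_append] at hx
      simp only [List.map_cons, List.map_nil, List.getLast?_concat, Option.mem_def,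
        Option.some_inj] at hx
      simp only [List.head?_cons, Option.mem_def, Option.some_inj] at hy
      subst hx; subst hy
      exact not_wlt_ell_a m
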